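/- Let g and h be two elements of the coset D(2,q)a (i.e., g and h are invertible anti-diagonal 2×2 matrices over F), and suppose both g and h have order 2. Then there exists a diagonal matrix d ∈ D(2,q) such that d g d⁻¹ = h. Consequently the elements of order 2 in D(2,q)a form a single conjugacy class in M(2,q). -/
import Mathlib


open Matrix

/-- A positive integer is cube-free if no prime cube divides it. -/
def CubeFree (m : ℕ) : Prop := ∀ r : ℕ, r.Prime → ¬ r ^ 3 ∣ m

/-- A 2×2 matrix is diagonal. -/
def IsDiag2 {F : Type} [Field F] (A : Matrix (Fin 2) (Fin 2) F) : Prop :=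
  A 0 1 = 0 ∧ A 1 0 = 0

/-- A 2×2 matrix is anti-diagonal. -/
def IsAnti2 {F : Type} [Field F] (A : Matrix (Fin 2) (Fin 2) F) : Prop :=
  A 0 0 = 0 ∧ A 1 1 = 0

/-- `D(2,q)`: the subgroup of invertible diagonal matrices in `GL(2,F)`. -/
def Dsub (F : Type) [Field F] : Subgroup (GL (Fin 2) F) where
  carrier := {g | IsDiag2 (g : Matrix (Fin 2) (Fin 2) F)}
  one_mem' := by constructor <;> simp
  mul_mem' := by
    rintro a b ⟨ha1, ha2⟩ ⟨hb1, hb2⟩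
    constructor <;>
      simp [Units.val_mul, Matrix.mul_apply, Fin.sum_univ_two, ha1, ha2, hb1, hb2]
  inv_mem' := by
    rintro g ⟨h1, h2⟩
    have hAB : (g : Matrix (Fin 2) (Fin 2) F) * ((g⁻¹ : GL (Fin 2) F) : Matrix (Fin 2) (Fin 2) F) = 1 := by
      exact_mod_cast g.mul_inv
    have hdet : (g : Matrix (Fin 2) (Fin 2) F).det ≠ 0 := by
      have : IsUnit (g : Matrix (Fin 2) (Fin 2) F) := ⟨g, rfl⟩
      exact ((Matrix.isUnit_iff_isUnit_det _).mp this).ne_zero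
    rw [Matrix.det_fin_two, h1, h2] at hdet
    simp only [zero_mul, mul_zero, sub_zero] at hdet
    have h00 : (g : Matrix (Fin 2) (Fin 2) F) 0 0 ≠ 0 := left_ne_zero_of_mul hdet
    have h11 : (g : Matrix (Fin 2) (Fin 2) F) 1 1 ≠ 0 := right_ne_zero_of_mul hdet
    have e01 := congrFun (congrFun hAB 0) 1
    have e10 := congrFun (congrFun hAB 1) 0
    simp [Matrix.mul_apply, Fin.sum_univ_two, h1, h2, Matrix.one_apply] at e01 e10
    constructor <;> rw [Matrix.coe_units_inv]
    · rcases e01 with h | h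
      · exact absurd h h00
      · exact h
    · rcases e10 with h | h
      · exact absurd h h11
      · exact h

section Msub
variable {F : Type} [Field F]

lemma IsDiag2.mul2 {A B : Matrix (Fin 2) (Fin 2) F} (hA : IsDiag2 A) (hB : IsDiag2 B) :
    IsDiag2 (A * B) := by
  obtain ⟨a1, a2⟩ := hA; obtain ⟨b1, b2⟩ := hB
  constructor <;> simp [Matrix.mul_apply, Fin.sum_univ_two, a1, a2, b1, b2]

lemma IsDiag2.mul_anti {A B : Matrix (Fin 2) (Fin 2) F} (hA : IsDiag2 A) (hB : IsAnti2 B) :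
    IsAnti2 (A * B) := by
  obtain ⟨a1, a2⟩ := hA; obtain ⟨b1, b2⟩ := hB
  constructor <;> simp [Matrix.mul_apply, Fin.sum_univ_two, a1, a2, b1, b2]

lemma IsAnti2.mul_diag {A B : Matrix (Fin 2) (Fin 2) F} (hA : IsAnti2 A) (hB : IsDiag2 B) :
    IsAnti2 (A * B) := by
  obtain ⟨a1, a2⟩ := hA; obtain ⟨b1, b2⟩ := hB
  constructor <;> simp [Matrix.mul_apply, Fin.sum_univ_two, a1, a2, b1, b2]

lemma IsAnti2.mul_anti {A B : Matrix (Fin 2) (Fin 2) F} (hA : IsAnti2 A) (hB : IsAnti2 B) :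
    IsDiag2 (A * B) := by
  obtain ⟨a1, a2⟩ := hA; obtain ⟨b1, b2⟩ := hB
  constructor <;> simp [Matrix.mul_apply, Fin.sum_univ_two, a1, a2, b1, b2]

/-- `M(2,q)`: the subgroup of monomial matrices (diagonal or anti-diagonal) in `GL(2,F)`. -/
def Msub (F : Type) [Field F] : Subgroup (GL (Fin 2) F) where
  carrier := {g | IsDiag2 (g : Matrix (Fin 2) (Fin 2) F) ∨ IsAnti2 (g : Matrix (Fin 2) (Fin 2) F)}
  one_mem' := by left; constructor <;> simp
  mul_mem' := by
    rintro a b (ha | ha) (hb | hb)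
    · left; have := ha.mul2 hb; simpa [Units.val_mul] using this
    · right; have := ha.mul_anti hb; simpa [Units.val_mul] using this
    · right; have := ha.mul_diag hb; simpa [Units.val_mul] using this
    · left; have := ha.mul_anti hb; simpa [Units.val_mul] using this
  inv_mem' := by
    rintro g (⟨h1, h2⟩ | ⟨h1, h2⟩)
    · left
      have hAB : (g : Matrix (Fin 2) (Fin 2) F) * ((g⁻¹ : GL (Fin 2) F) : Matrix (Fin 2) (Fin 2) F) = 1 := by
        exact_mod_cast g.mul_inv
      have hdet : (g : Matrix (Fin 2) (Fin 2) F).det ≠ 0 := by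
        have : IsUnit (g : Matrix (Fin 2) (Fin 2) F) := ⟨g, rfl⟩
        exact ((Matrix.isUnit_iff_isUnit_det _).mp this).ne_zero
      rw [Matrix.det_fin_two, h1, h2] at hdet
      simp only [zero_mul, mul_zero, sub_zero] at hdet
      have h00 : (g : Matrix (Fin 2) (Fin 2) F) 0 0 ≠ 0 := left_ne_zero_of_mul hdet
      have h11 : (g : Matrix (Fin 2) (Fin 2) F) 1 1 ≠ 0 := right_ne_zero_of_mul hdet
      have e01 := congrFun (congrFun hAB 0) 1
      have e10 := congrFun (congrFun hAB 1) 0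
      simp [Matrix.mul_apply, Fin.sum_univ_two, h1, h2, Matrix.one_apply] at e01 e10
      constructor <;> rw [Matrix.coe_units_inv]
      · rcases e01 with h | h
        · exact absurd h h00
        · exact h
      · rcases e10 with h | h
        · exact absurd h h11
        · exact h
    · right
      have hAB : (g : Matrix (Fin 2) (Fin 2) F) * ((g⁻¹ : GL (Fin 2) F) : Matrix (Fin 2) (Fin 2) F) = 1 := by
        exact_mod_cast g.mul_inv
      have hdet : (g : Matrix (Fin 2) (Fin 2) F).det ≠ 0 := by
        have : IsUnit (g : Matrix (Fin 2) (Fin 2) F) := ⟨g, rfl⟩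
        exact ((Matrix.isUnit_iff_isUnit_det _).mp this).ne_zero
      rw [Matrix.det_fin_two, h1, h2] at hdet
      simp only [zero_mul, mul_zero, zero_sub, neg_ne_zero] at hdet
      have h01 : (g : Matrix (Fin 2) (Fin 2) F) 0 1 ≠ 0 := left_ne_zero_of_mul hdet
      have h10 : (g : Matrix (Fin 2) (Fin 2) F) 1 0 ≠ 0 := right_ne_zero_of_mul hdet
      have e01 := congrFun (congrFun hAB 0) 1
      have e10 := congrFun (congrFun hAB 1) 0
      simp [Matrix.mul_apply, Fin.sum_univ_two, h1, h2, Matrix.one_apply] at e01 e10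
      constructor <;> rw [Matrix.coe_units_inv]
      · rcases e10 with h | h
        · exact absurd h h10
        · exact h
      · rcases e01 with h | h
        · exact absurd h h01
        · exact h

end Msub

section RepDefs
variable (F : Type) [Field F]

/-- A subgroup of `GL(2,F)` is reducible if some nonzero proper subspace of `F²` is
invariant under all its elements. -/
def Reducible (K : Subgroup (GL (Fin 2) F)) : Prop :=
  ∃ W : Submodule F (Fin 2 → F), W ≠ ⊥ ∧ W ≠ ⊤ ∧
    ∀ g ∈ K, ∀ v ∈ W, Matrix.mulVec (g : Matrix (Fin 2) (Fin 2) F) v ∈ W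

/-- `K` permutes the pair of one-dimensional subspaces `V₁, V₂` decomposing `F²`. -/
def ImprimitiveOn (K : Subgroup (GL (Fin 2) F)) (V₁ V₂ : Submodule F (Fin 2 → F)) : Prop :=
  Module.finrank F V₁ = 1 ∧ Module.finrank F V₂ = 1 ∧ IsCompl V₁ V₂ ∧
  ∀ g ∈ K,
    (V₁.map (Matrix.mulVecLin (g : Matrix (Fin 2) (Fin 2) F)) = V₁ ∧
     V₂.map (Matrix.mulVecLin (g : Matrix (Fin 2) (Fin 2) F)) = V₂) ∨
    (V₁.map (Matrix.mulVecLin (g : Matrix (Fin 2) (Fin 2) F)) = V₂ ∧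
     V₂.map (Matrix.mulVecLin (g : Matrix (Fin 2) (Fin 2) F)) = V₁)

/-- An irreducible subgroup of `GL(2,F)` is imprimitive if it permutes a pair of
one-dimensional subspaces decomposing `F²`. -/
def Imprimitive (K : Subgroup (GL (Fin 2) F)) : Prop :=
  ¬ Reducible F K ∧ ∃ V₁ V₂ : Submodule F (Fin 2 → F), ImprimitiveOn F K V₁ V₂

/-- An irreducible subgroup of `GL(2,F)` is primitive if it is not imprimitive. -/
def Primitive (K : Subgroup (GL (Fin 2) F)) : Prop :=
  ¬ Reducible F K ∧ ¬ ∃ V₁ V₂ : Submodule F (Fin 2 → F), ImprimitiveOn F K V₁ V₂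

end RepDefs

/-- Two subgroups are conjugate. -/
def IsConjugate {G : Type*} [Group G] (K₁ K₂ : Subgroup G) : Prop :=
  ∃ g : G, Subgroup.map (MulAut.conj g).toMonoidHom K₁ = K₂
/-- Any two elements of order 2 in the coset `D(2,q)a` (the invertible anti-diagonal
matrices) are conjugate by an element of `D(2,q)`; hence they form a single conjugacy
class in `M(2,q)`. -/
theorem antidiag_order_two_conjugate
    (p k₀ : ℕ) (hp : p.Prime) (hk₀ : 1 ≤ k₀)
    (F : Type) [Field F] [Fintype F] (hF : Fintype.card F = p ^ k₀)
    (g h : GL (Fin 2) F)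
    (hg : IsAnti2 (g : Matrix (Fin 2) (Fin 2) F))
    (hh : IsAnti2 (h : Matrix (Fin 2) (Fin 2) F))
    (hog : orderOf g = 2) (hoh : orderOf h = 2) :
    ∃ d : GL (Fin 2) F, d ∈ Dsub F ∧ d * g * d⁻¹ = h := by
  set G : Matrix (Fin 2) (Fin 2) F := (g : Matrix (Fin 2) (Fin 2) F) with hG
  set H : Matrix (Fin 2) (Fin 2) F := (h : Matrix (Fin 2) (Fin 2) F) with hH
  have hgdet : G.det ≠ 0 := by
    have : IsUnit G := ⟨g, rfl⟩
    exact ((Matrix.isUnit_iff_isUnit_det _).mp this).ne_zero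
  have hhdet : H.det ≠ 0 := by
    have : IsUnit H := ⟨h, rfl⟩
    exact ((Matrix.isUnit_iff_isUnit_det _).mp this).ne_zero
  rw [Matrix.det_fin_two, hg.1, hg.2, zero_mul, zero_sub, neg_ne_zero] at hgdet
  rw [Matrix.det_fin_two, hh.1, hh.2, zero_mul, zero_sub, neg_ne_zero] at hhdet
  have hb : G 0 1 ≠ 0 := left_ne_zero_of_mul hgdet
  have hb' : H 0 1 ≠ 0 := left_ne_zero_of_mul hhdet
  have hg2 : G * G = 1 := by
    have h1 := pow_orderOf_eq_one g
    rw [hog] at h1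
    have h2 : (g * g : GL (Fin 2) F) = 1 := by rw [← sq]; exact h1
    have h3 := congrArg Units.val h2
    simpa [Units.val_mul] using h3
  have hh2 : H * H = 1 := by
    have h1 := pow_orderOf_eq_one h
    rw [hoh] at h1
    have h2 : (h * h : GL (Fin 2) F) = 1 := by rw [← sq]; exact h1
    have h3 := congrArg Units.val h2
    simpa [Units.val_mul] using h3
  have hgc : G 0 1 * G 1 0 = 1 := by
    have := congrFun (congrFun hg2 0) 0
    simpa [Matrix.mul_apply, Fin.sum_univ_two, hg.1, hg.2, Matrix.one_apply] using this
  have hhc : H 0 1 * H 1 0 = 1 := by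
    have := congrFun (congrFun hh2 0) 0
    simpa [Matrix.mul_apply, Fin.sum_univ_two, hh.1, hh.2, Matrix.one_apply] using this
  have hg10 : G 1 0 = (G 0 1)⁻¹ := by field_simp; linear_combination hgc
  have hh10 : H 1 0 = (H 0 1)⁻¹ := by field_simp; linear_combination hhc
  set t : F := H 0 1 * (G 0 1)⁻¹ with ht
  have htne : t ≠ 0 := mul_ne_zero hb' (inv_ne_zero hb)
  set D : Matrix (Fin 2) (Fin 2) F := Matrix.diagonal ![t, 1] with hD
  set Di : Matrix (Fin 2) (Fin 2) F := Matrix.diagonal ![t⁻¹, 1] with hDi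
  have hDDi : D * Di = 1 := by
    ext i j
    fin_cases i <;> fin_cases j <;>
      simp [hD, hDi, Matrix.mul_apply, Fin.sum_univ_two, Matrix.diagonal_apply,
        Matrix.one_apply, mul_inv_cancel₀ htne]
  have hDiD : Di * D = 1 := by
    ext i j
    fin_cases i <;> fin_cases j <;>
      simp [hD, hDi, Matrix.mul_apply, Fin.sum_univ_two, Matrix.diagonal_apply,
        Matrix.one_apply, inv_mul_cancel₀ htne]
  refine ⟨⟨D, Di, hDDi, hDiD⟩, ⟨rfl, rfl⟩, ?_⟩
  ext i j
  show (D * G * Di) i j = H i j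
  fin_cases i <;> fin_cases j <;>
    simp [hD, hDi, Matrix.mul_apply, Fin.sum_univ_two, Matrix.diagonal_apply,
      hg.1, hg.2, hh.1, hh.2, hg10, hh10, ht]
  · field_simp
  · field_simp
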